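/- Every minimal left ideal I of (C,*) is a closed and convex subset of C. -/

import Mathlib

/-- `I` is a left ideal of the semigroup `(C, mul)`: a nonempty subset of `C`
closed under left multiplication by elements of `C`. -/
def IsLeftIdeal {V : Type*} (C : Set V) (mul : V → V → V) (I : Set V) : Prop :=
  I.Nonempty ∧ I ⊆ C ∧ ∀ c ∈ C, ∀ i ∈ I, mul c i ∈ I

/-- `I` is a minimal left ideal of the semigroup `(C, mul)`. -/
def IsMinimalLeftIdeal {V : Type*} (C : Set V) (mul : V → V → V) (I : Set V) : Prop :=
  IsLeftIdeal C mul I ∧ ∀ J : Set V, IsLeftIdeal C mul J → J ⊆ I → J = I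

/-- Every minimal left ideal of a compact convex left-continuous affine semigroup
is closed and convex. -/
theorem minimal_left_ideal_closed_convex
    {V : Type*} [AddCommGroup V] [Module ℝ V] [TopologicalSpace V]
    [IsTopologicalAddGroup V] [ContinuousSMul ℝ V] [T2Space V] [LocallyConvexSpace ℝ V]
    (C : Set V) (hCne : C.Nonempty) (hCcomp : IsCompact C) (hCconv : Convex ℝ C)
    (mul : V → V → V)
    (hclosed : ∀ p ∈ C, ∀ q ∈ C, mul p q ∈ C)
    (hassoc : ∀ p ∈ C, ∀ q ∈ C, ∀ r ∈ C, mul (mul p q) r = mul p (mul q r))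
    (hcont : ∀ q ∈ C, ContinuousOn (fun p => mul p q) C)
    (haffl : ∀ q ∈ C, ∀ a ∈ C, ∀ b ∈ C, ∀ r : ℝ, 0 ≤ r → r ≤ 1 →
      mul (r • a + (1 - r) • b) q = r • mul a q + (1 - r) • mul b q)
    (I : Set V) (hI : IsMinimalLeftIdeal C mul I) :
    IsClosed I ∧ Convex ℝ I := by
  obtain ⟨⟨⟨i, hiI⟩, hIC, hIideal⟩, hmin⟩ := hI
  have hiC : i ∈ C := hIC hiI
  set J : Set V := (fun p => mul p i) '' C with hJdef
  have hJI : J ⊆ I := by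
    rintro _ ⟨c, hc, rfl⟩
    exact hIideal c hc i hiI
  have hJideal : IsLeftIdeal C mul J := by
    refine ⟨⟨mul i i, ⟨i, hiC, rfl⟩⟩, fun x hx => hIC (hJI hx), ?_⟩
    rintro c hc _ ⟨c', hc', rfl⟩
    exact ⟨mul c c', hclosed c hc c' hc', hassoc c hc c' hc' i hiC⟩
  have hJI' : J = I := hmin J hJideal hJI
  have hcomp : IsCompact J := hCcomp.image_of_continuousOn (hcont i hiC)
  have hconv : Convex ℝ J := by
    rintro _ ⟨a, ha, rfl⟩ _ ⟨b, hb, rfl⟩ r s hr hs hrs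
    refine ⟨r • a + s • b, hCconv ha hb hr hs hrs, ?_⟩
    have hs1 : s = 1 - r := by linarith
    subst hs1
    exact haffl i hiC a ha b hb r hr (by linarith)
  rw [← hJI']
  exact ⟨hcomp.isClosed, hconv⟩
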